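/- Let (λ₁,λ₂,λ₃) ∈ ℝ³ be nonzero, and consider the half-flat binary cubic p = λ₁u₁³ + λ₂(u₁²u₂ + u₂³) + λ₃u₁u₂². Then there exists s ∈ ℝ such that the binary cubic (1/3)u₁³ − u₁u₂² + s·p, i.e. the cubic with coefficient vector (1/3 + sλ₁, sλ₂, −1 + sλ₃, sλ₂), has vanishing discriminant Δ₃ = 0, equivalently has a root of multiplicity greater than one. -/

import Mathlib

noncomputable section

/-- The discriminant of a binary cubic `q 0 • u₁³ + q 1 • u₁²u₂ + q 2 • u₁u₂² + q 3 • u₂³`. -/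
def disc3 (q : Fin 4 → ℝ) : ℝ :=
  q 1 ^ 2 * q 2 ^ 2 - 4 * q 0 * q 2 ^ 3 - 4 * q 1 ^ 3 * q 3 +
    18 * q 0 * q 1 * q 2 * q 3 - 27 * q 0 ^ 2 * q 3 ^ 2

lemma disc3_eval (q0 q1 q2 q3 : ℝ) :
    disc3 ![q0, q1, q2, q3] =
      q1 ^ 2 * q2 ^ 2 - 4 * q0 * q2 ^ 3 - 4 * q1 ^ 3 * q3 +
        18 * q0 * q1 * q2 * q3 - 27 * q0 ^ 2 * q3 ^ 2 := by
  simp [disc3]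

/-- If a cubic (possibly with vanishing leading coefficient) has a double root, its
discriminant vanishes. -/
lemma disc_zero_of_double_root (q0 q1 q2 q3 x : ℝ)
    (hP : q0 * x ^ 3 + q1 * x ^ 2 + q2 * x + q3 = 0)
    (hP' : 3 * q0 * x ^ 2 + 2 * q1 * x + q2 = 0) :
    q1 ^ 2 * q2 ^ 2 - 4 * q0 * q2 ^ 3 - 4 * q1 ^ 3 * q3 +
      18 * q0 * q1 * q2 * q3 - 27 * q0 ^ 2 * q3 ^ 2 = 0 := by
  by_cases h0 : q0 = 0
  · subst h0
    linear_combination (-4 * q1 ^ 3) * hP + (q1 ^ 2 * (2 * q1 * x + q2)) * hP'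
  · have hR : (6 * q0 * q2 - 2 * q1 ^ 2) * x + (9 * q0 * q3 - q1 * q2) = 0 := by
      linear_combination 9 * q0 * hP - (3 * q0 * x + q1) * hP'
    have hD : 3 * q0 * (9 * q0 * q3 - q1 * q2) ^ 2
        - 2 * q1 * (6 * q0 * q2 - 2 * q1 ^ 2) * (9 * q0 * q3 - q1 * q2)
        + q2 * (6 * q0 * q2 - 2 * q1 ^ 2) ^ 2 = 0 := by
      linear_combination (6 * q0 * q2 - 2 * q1 ^ 2) ^ 2 * hP'
        + (3 * q0 * ((9 * q0 * q3 - q1 * q2) - (6 * q0 * q2 - 2 * q1 ^ 2) * x)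
            - 2 * q1 * (6 * q0 * q2 - 2 * q1 ^ 2)) * hR
    have h9 : q0 * (q1 ^ 2 * q2 ^ 2 - 4 * q0 * q2 ^ 3 - 4 * q1 ^ 3 * q3 +
        18 * q0 * q1 * q2 * q3 - 27 * q0 ^ 2 * q3 ^ 2) = 0 := by
      linear_combination (-1 / 9 : ℝ) * hD
    exact (mul_eq_zero.mp h9).resolve_left h0

/-- Roots of the auxiliary quartic on both sides of `0`, when `l2 > 0`. -/
lemma groot_pos (l1 l2 l3 : ℝ) (h : 0 < l2) :
    ∃ a b : ℝ, a ≠ b ∧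
      l2 * a ^ 4 + (6 * l1 + 2 * l3) * a ^ 3 + 6 * l2 * a ^ 2 - 3 * l2 = 0 ∧
      l2 * b ^ 4 + (6 * l1 + 2 * l3) * b ^ 3 + 6 * l2 * b ^ 2 - 3 * l2 = 0 := by
  obtain ⟨M, hM2, h1, h1'⟩ : ∃ M : ℝ, 2 ≤ M ∧ 2 * l2 ≤ l2 * M + (6 * l1 + 2 * l3) ∧
      2 * l2 ≤ l2 * M - (6 * l1 + 2 * l3) := by
    refine ⟨2 + |6 * l1 + 2 * l3| / l2, ?_, ?_, ?_⟩
    · have : 0 ≤ |6 * l1 + 2 * l3| / l2 := div_nonneg (abs_nonneg _) h.le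
      linarith
    · have h2 : l2 * (2 + |6 * l1 + 2 * l3| / l2) = 2 * l2 + |6 * l1 + 2 * l3| := by
        field_simp
      rw [h2]
      linarith [neg_abs_le (6 * l1 + 2 * l3)]
    · have h2 : l2 * (2 + |6 * l1 + 2 * l3| / l2) = 2 * l2 + |6 * l1 + 2 * l3| := by
        field_simp
      rw [h2]
      linarith [le_abs_self (6 * l1 + 2 * l3)]
  set f : ℝ → ℝ := fun x => l2 * x ^ 4 + (6 * l1 + 2 * l3) * x ^ 3 + 6 * l2 * x ^ 2 - 3 * l2
    with hf
  have hcont : Continuous f := by fun_prop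
  have hf0 : f 0 = -3 * l2 := by simp [hf]
  have hf0neg : f 0 < 0 := by rw [hf0]; linarith
  have hM0 : (0 : ℝ) < M := by linarith
  have h8 : (8 : ℝ) ≤ M ^ 3 := by nlinarith [sq_nonneg (M - 2), sq_nonneg M]
  have key : 8 * (2 * l2) ≤ M ^ 3 * (l2 * M + (6 * l1 + 2 * l3)) :=
    mul_le_mul h8 h1 (by linarith) (by positivity)
  have key' : 8 * (2 * l2) ≤ M ^ 3 * (l2 * M - (6 * l1 + 2 * l3)) :=
    mul_le_mul h8 h1' (by linarith) (by positivity)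
  have hfM : 0 ≤ f M := by
    have : f M = M ^ 3 * (l2 * M + (6 * l1 + 2 * l3)) + 6 * l2 * M ^ 2 - 3 * l2 := by
      simp only [hf]; ring
    nlinarith [sq_nonneg M]
  have hfM' : 0 ≤ f (-M) := by
    have : f (-M) = M ^ 3 * (l2 * M - (6 * l1 + 2 * l3)) + 6 * l2 * M ^ 2 - 3 * l2 := by
      simp only [hf]; ring
    nlinarith [sq_nonneg M]
  obtain ⟨b, hbmem, hb⟩ :=
    intermediate_value_Icc hM0.le hcont.continuousOn (Set.mem_Icc.mpr ⟨hf0neg.le, hfM⟩)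
  obtain ⟨a, hamem, ha⟩ :=
    intermediate_value_Icc' (neg_nonpos.mpr hM0.le) hcont.continuousOn
      (Set.mem_Icc.mpr ⟨hf0neg.le, hfM'⟩)
  have hane : a ≠ 0 := fun h' => by rw [h'] at ha; rw [ha] at hf0neg; exact lt_irrefl 0 hf0neg
  have hab : a ≠ b := by
    intro h'
    have ha0 : a ≤ 0 := hamem.2
    have hb0 : 0 ≤ b := hbmem.1
    exact hane (le_antisymm ha0 (h' ▸ hb0))
  exact ⟨a, b, hab, ha, hb⟩

lemma groot (l1 l2 l3 : ℝ) (h : l2 ≠ 0) :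
    ∃ a b : ℝ, a ≠ b ∧
      l2 * a ^ 4 + (6 * l1 + 2 * l3) * a ^ 3 + 6 * l2 * a ^ 2 - 3 * l2 = 0 ∧
      l2 * b ^ 4 + (6 * l1 + 2 * l3) * b ^ 3 + 6 * l2 * b ^ 2 - 3 * l2 = 0 := by
  rcases h.lt_or_gt with hneg | hpos
  · obtain ⟨a, b, hab, ha, hb⟩ := groot_pos (-l1) (-l2) (-l3) (by linarith)
    exact ⟨a, b, hab, by linear_combination -ha, by linear_combination -hb⟩
  · exact groot_pos l1 l2 l3 hpos

/-- A nonzero half-flat cubic cannot have double roots at two distinct points. -/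
lemma unique_bad (a b l1 l2 l3 : ℝ) (hab : a ≠ b)
    (e1 : l1 * a ^ 3 + l2 * a ^ 2 + l3 * a + l2 = 0)
    (e2 : 3 * l1 * a ^ 2 + 2 * l2 * a + l3 = 0)
    (e3 : l1 * b ^ 3 + l2 * b ^ 2 + l3 * b + l2 = 0)
    (e4 : 3 * l1 * b ^ 2 + 2 * l2 * b + l3 = 0) : l2 = 0 := by
  have hab' : a - b ≠ 0 := sub_ne_zero.mpr hab
  have h5' : (a - b) * (3 * l1 * (a + b) + 2 * l2) = 0 := by linear_combination e2 - e4
  have h5 : 3 * l1 * (a + b) + 2 * l2 = 0 := by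
    rcases mul_eq_zero.mp h5' with h' | h'
    · exact absurd h' hab'
    · exact h'
  have h6 : l2 * a ^ 2 + 2 * l3 * a + 3 * l2 = 0 := by linear_combination 3 * e1 - a * e2
  have h7 : l2 * b ^ 2 + 2 * l3 * b + 3 * l2 = 0 := by linear_combination 3 * e3 - b * e4
  have h8' : (a - b) * (l2 * (a + b) + 2 * l3) = 0 := by linear_combination h6 - h7
  have h8 : l2 * (a + b) + 2 * l3 = 0 := by
    rcases mul_eq_zero.mp h8' with h' | h'
    · exact absurd h' hab'
    · exact h'
  have h10 : l2 * (a - b) ^ 2 = 0 := by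
    linear_combination (a + b) * h8 - 2 * (a + b) * e2 + 2 * a ^ 2 * h5
  rcases mul_eq_zero.mp h10 with h' | h'
  · exact h'
  · exact absurd h' (pow_ne_zero 2 hab')

/-- Given a root `x` of the auxiliary quartic at which the cubic `p` and its derivative do
not both vanish, produce `s` on the discriminant-zero locus. -/
lemma solve_at (l1 l2 l3 x : ℝ)
    (hg : l2 * x ^ 4 + (6 * l1 + 2 * l3) * x ^ 3 + 6 * l2 * x ^ 2 - 3 * l2 = 0)
    (hgood : ¬(l1 * x ^ 3 + l2 * x ^ 2 + l3 * x + l2 = 0 ∧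
      3 * l1 * x ^ 2 + 2 * l2 * x + l3 = 0)) :
    ∃ s : ℝ, disc3 ![1 / 3 + s * l1, s * l2, -1 + s * l3, s * l2] = 0 := by
  by_cases hp : l1 * x ^ 3 + l2 * x ^ 2 + l3 * x + l2 = 0
  · -- then p'(x) ≠ 0 and x³ = 3x
    have hp' : 3 * l1 * x ^ 2 + 2 * l2 * x + l3 ≠ 0 := fun h' => hgood ⟨hp, h'⟩
    have hx3 : (x ^ 3 - 3 * x) * (3 * l1 * x ^ 2 + 2 * l2 * x + l3) = 0 := by
      linear_combination -hg + (3 * x ^ 2 - 3) * hp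
    have hx3' : x ^ 3 - 3 * x = 0 := by
      rcases mul_eq_zero.mp hx3 with h' | h'
      · exact h'
      · exact absurd h' hp'
    refine ⟨-(x ^ 2 - 1) / (3 * l1 * x ^ 2 + 2 * l2 * x + l3), ?_⟩
    rw [disc3_eval]
    set s : ℝ := -(x ^ 2 - 1) / (3 * l1 * x ^ 2 + 2 * l2 * x + l3) with hs
    have hP : (1 / 3 + s * l1) * x ^ 3 + (s * l2) * x ^ 2 + (-1 + s * l3) * x + s * l2 = 0 := by
      have : (1 / 3 + s * l1) * x ^ 3 + (s * l2) * x ^ 2 + (-1 + s * l3) * x + s * l2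
          = (x ^ 3 - 3 * x) / 3 + s * (l1 * x ^ 3 + l2 * x ^ 2 + l3 * x + l2) := by ring
      rw [this, hp, hx3']
      ring
    have hP' : 3 * (1 / 3 + s * l1) * x ^ 2 + 2 * (s * l2) * x + (-1 + s * l3) = 0 := by
      have : 3 * (1 / 3 + s * l1) * x ^ 2 + 2 * (s * l2) * x + (-1 + s * l3)
          = (x ^ 2 - 1) + s * (3 * l1 * x ^ 2 + 2 * l2 * x + l3) := by ring
      rw [this, hs]
      rw [div_mul_cancel₀ _ hp']
      ring
    exact disc_zero_of_double_root _ _ _ _ x hP hP'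
  · refine ⟨-(x ^ 3 / 3 - x) / (l1 * x ^ 3 + l2 * x ^ 2 + l3 * x + l2), ?_⟩
    rw [disc3_eval]
    set s : ℝ := -(x ^ 3 / 3 - x) / (l1 * x ^ 3 + l2 * x ^ 2 + l3 * x + l2) with hs
    have hsp : s * (l1 * x ^ 3 + l2 * x ^ 2 + l3 * x + l2) = -(x ^ 3 / 3 - x) := by
      rw [hs, div_mul_cancel₀ _ hp]
    have hP : (1 / 3 + s * l1) * x ^ 3 + (s * l2) * x ^ 2 + (-1 + s * l3) * x + s * l2 = 0 := by
      linear_combination hsp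
    have hP'mul : (l1 * x ^ 3 + l2 * x ^ 2 + l3 * x + l2) *
        ((x ^ 2 - 1) + s * (3 * l1 * x ^ 2 + 2 * l2 * x + l3)) = 0 := by
      linear_combination (3 * l1 * x ^ 2 + 2 * l2 * x + l3) * hsp + (1 / 3 : ℝ) * hg
    have hP'0 : (x ^ 2 - 1) + s * (3 * l1 * x ^ 2 + 2 * l2 * x + l3) = 0 :=
      (mul_eq_zero.mp hP'mul).resolve_left hp
    have hP' : 3 * (1 / 3 + s * l1) * x ^ 2 + 2 * (s * l2) * x + (-1 + s * l3) = 0 := by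
      linear_combination hP'0
    exact disc_zero_of_double_root _ _ _ _ x hP hP'

/-- For a nonzero half-flat cubic `p = λ₁u₁³ + λ₂(u₁²u₂ + u₂³) + λ₃u₁u₂²`, the affine line
through `(1/3)u₁³ − u₁u₂²` in direction `p` meets the discriminant-zero locus. -/
theorem stmt19 (l1 l2 l3 : ℝ) (h : ¬(l1 = 0 ∧ l2 = 0 ∧ l3 = 0)) :
    ∃ s : ℝ, disc3 ![1 / 3 + s * l1, s * l2, -1 + s * l3, s * l2] = 0 := by
  by_cases hl2 : l2 = 0
  · subst hl2
    by_cases hl1 : l1 = 0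
    · have hl3 : l3 ≠ 0 := fun h3 => h ⟨hl1, rfl, h3⟩
      refine ⟨1 / l3, ?_⟩
      rw [disc3_eval]
      field_simp
      ring
    · refine ⟨-1 / (3 * l1), ?_⟩
      rw [disc3_eval]
      have h0 : 1 / 3 + -1 / (3 * l1) * l1 = 0 := by field_simp; ring
      rw [h0]
      ring
  · obtain ⟨a, b, hab, hga, hgb⟩ := groot l1 l2 l3 hl2
    by_cases hbada : l1 * a ^ 3 + l2 * a ^ 2 + l3 * a + l2 = 0 ∧
        3 * l1 * a ^ 2 + 2 * l2 * a + l3 = 0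
    · by_cases hbadb : l1 * b ^ 3 + l2 * b ^ 2 + l3 * b + l2 = 0 ∧
          3 * l1 * b ^ 2 + 2 * l2 * b + l3 = 0
      · exact absurd (unique_bad a b l1 l2 l3 hab hbada.1 hbada.2 hbadb.1 hbadb.2) hl2
      · exact solve_at l1 l2 l3 b hgb hbadb
    · exact solve_at l1 l2 l3 a hga hbada
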